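/- arXiv:1805.10851 — 2 statements merged into one kernel-verified Lean document; each statement's English description precedes it below -/
import Mathlib

section
/- Let α > 0 and let w: I → ℝ be a C² solution of the ODE w''(y) = (1 + w'(y)²)^{(3-α)/2} on an open interval I. Fix θ ∈ (-π/2, π/2) and a ∈ ℝ, and define w_θ(x,y) = (cos θ)^{-(α+1)} · w((cos θ)^α · y) + (tan θ)·x + a on the set of (x,y) with (cos θ)^α · y ∈ I. Then w_θ satisfies the two-dimensional α-translating soliton equation div(Dw_θ/√(1+|Dw_θ|²)) = (1+|Dw_θ|²)^{-α/2}. -/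
open Real Set

theorem alpha_grim_reaper_solves_soliton_equation
    (α : ℝ) (hα : 0 < α) (c d : ℝ) (w : ℝ → ℝ)
    (hw : ContDiffOn ℝ 2 w (Set.Ioo c d))
    (hode : ∀ y ∈ Set.Ioo c d,
      deriv (deriv w) y = (1 + (deriv w y)^2) ^ ((3 - α)/2))
    (θ a : ℝ) (hθ : θ ∈ Set.Ioo (-(π/2)) (π/2)) :
    let wθ : ℝ × ℝ → ℝ := fun p =>
      (Real.cos θ) ^ (-(α + 1)) * w ((Real.cos θ) ^ α * p.2)
        + Real.tan θ * p.1 + a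
    let ux : (ℝ × ℝ) → ℝ := fun q => fderiv ℝ wθ q (1, 0)
    let uy : (ℝ × ℝ) → ℝ := fun q => fderiv ℝ wθ q (0, 1)
    ∀ p : ℝ × ℝ, (Real.cos θ) ^ α * p.2 ∈ Set.Ioo c d →
      fderiv ℝ (fun q => ux q / Real.sqrt (1 + (ux q)^2 + (uy q)^2)) p (1, 0)
        + fderiv ℝ (fun q => uy q / Real.sqrt (1 + (ux q)^2 + (uy q)^2)) p (0, 1)
        = (1 + (ux p)^2 + (uy p)^2) ^ (-(α/2)) := by
  intro wθ ux uy p hp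
  have hcos : 0 < Real.cos θ := Real.cos_pos_of_mem_Ioo hθ
  set c0 := Real.cos θ with hc0
  set s : ℝ := c0 ^ α with hs
  set C : ℝ := c0 ^ (-(α + 1)) with hC
  set T := Real.tan θ with hT
  have hspos : 0 < s := Real.rpow_pos_of_pos hcos α
  have hCpos : 0 < C := Real.rpow_pos_of_pos hcos _
  set v : ℝ → ℝ := fun y => C * (s * deriv w (s * y)) with hv_def
  set U : Set (ℝ × ℝ) := {q : ℝ × ℝ | s * q.2 ∈ Set.Ioo c d} with hUdef
  have hUopen : IsOpen U := isOpen_Ioo.preimage (continuous_const.mul continuous_snd)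
  have hpU : p ∈ U := hp
  have hw1 : DifferentiableOn ℝ w (Set.Ioo c d) := hw.differentiableOn two_ne_zero
  have hw2 : DifferentiableOn ℝ (deriv w) (Set.Ioo c d) :=
    (hw.deriv_of_isOpen isOpen_Ioo (show (1 : WithTop ℕ∞) + 1 ≤ 2 from one_add_one_eq_two.le)).differentiableOn one_ne_zero
  have hwθ : ∀ q ∈ U, HasFDerivAt wθ
      (C • ((deriv w (s * q.2)) • (s • ContinuousLinearMap.snd ℝ ℝ ℝ))
        + T • ContinuousLinearMap.fst ℝ ℝ ℝ) q := by
    intro q hq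
    have hin : HasFDerivAt (fun q : ℝ × ℝ => s * q.2)
        (s • ContinuousLinearMap.snd ℝ ℝ ℝ) q := (hasFDerivAt_snd.const_mul s)
    have hwd : HasDerivAt w (deriv w (s * q.2)) (s * q.2) :=
      (hw1.differentiableAt (isOpen_Ioo.mem_nhds hq)).hasDerivAt
    have hcomp := hwd.comp_hasFDerivAt q hin
    have h1 := hcomp.const_mul C
    have h2 : HasFDerivAt (fun q : ℝ × ℝ => T * q.1)
        (T • ContinuousLinearMap.fst ℝ ℝ ℝ) q := (hasFDerivAt_fst.const_mul T)
    exact ((h1.add h2).add_const a)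
  have hux : ∀ q ∈ U, ux q = T := by
    intro q hq
    have h := (hwθ q hq).fderiv
    simp only [ux, h, ContinuousLinearMap.add_apply, ContinuousLinearMap.smul_apply,
      ContinuousLinearMap.coe_snd', ContinuousLinearMap.coe_fst', smul_eq_mul]
    ring
  have huy : ∀ q ∈ U, uy q = v q.2 := by
    intro q hq
    have h := (hwθ q hq).fderiv
    simp only [uy, h, ContinuousLinearMap.add_apply, ContinuousLinearMap.smul_apply,
      ContinuousLinearMap.coe_snd', ContinuousLinearMap.coe_fst', smul_eq_mul, hv_def]
    ring
  -- eventual equalities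
  have hev1 : (fun q : ℝ × ℝ => ux q / Real.sqrt (1 + (ux q)^2 + (uy q)^2))
      =ᶠ[nhds p] fun q : ℝ × ℝ => T / Real.sqrt (1 + T^2 + (v q.2)^2) := by
    filter_upwards [hUopen.mem_nhds hpU] with q hq
    rw [hux q hq, huy q hq]
  have hev2 : (fun q : ℝ × ℝ => uy q / Real.sqrt (1 + (ux q)^2 + (uy q)^2))
      =ᶠ[nhds p] fun q : ℝ × ℝ => v q.2 / Real.sqrt (1 + T^2 + (v q.2)^2) := by
    filter_upwards [hUopen.mem_nhds hpU] with q hq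
    rw [hux q hq, huy q hq]
  rw [hev1.fderiv_eq, hev2.fderiv_eq, hux p hpU, huy p hpU]
  -- one-variable derivatives
  set b := deriv w (s * p.2) with hb
  set b' := deriv (deriv w) (s * p.2) with hb'
  have hvd : HasDerivAt v (C * (s * (b' * s))) p.2 := by
    have hb'd : HasDerivAt (deriv w) b' (s * p.2) :=
      (hw2.differentiableAt (isOpen_Ioo.mem_nhds hp)).hasDerivAt
    have hlin : HasDerivAt (fun y : ℝ => s * y) s p.2 := by
      simpa using (hasDerivAt_id p.2).const_mul s
    have hcomp : HasDerivAt (fun y : ℝ => deriv w (s * y)) (b' * s) p.2 :=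
      hb'd.comp p.2 hlin
    exact (hcomp.const_mul s).const_mul C
  have hins_pos : 0 < 1 + T^2 + (v p.2)^2 := by positivity
  have hSin : HasDerivAt (fun y : ℝ => 1 + T^2 + (v y)^2)
      (0 + (2 : ℕ) * v p.2 ^ 1 * (C * (s * (b' * s)))) p.2 :=
    (hasDerivAt_const p.2 (1 + T^2)).add (hvd.pow 2)
  have hSqrt := hSin.sqrt hins_pos.ne'
  have hS_pos : 0 < Real.sqrt (1 + T^2 + (v p.2)^2) := Real.sqrt_pos.2 hins_pos
  have hφ1 := (hasDerivAt_const p.2 T).div hSqrt hS_pos.ne'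
  have hφ2 := hvd.div hSqrt hS_pos.ne'
  have e3 : fderiv ℝ (fun q : ℝ × ℝ => T / Real.sqrt (1 + T^2 + (v q.2)^2)) p
      = _ := (hφ1.comp_hasFDerivAt p hasFDerivAt_snd).fderiv
  have e4 : fderiv ℝ (fun q : ℝ × ℝ => v q.2 / Real.sqrt (1 + T^2 + (v q.2)^2)) p
      = _ := (hφ2.comp_hasFDerivAt p hasFDerivAt_snd).fderiv
  rw [e3, e4]
  simp only [ContinuousLinearMap.smul_apply, ContinuousLinearMap.coe_snd', smul_eq_mul, mul_zero,
    mul_one]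
  have hg : (0:ℝ) < 1 + b^2 := by positivity
  have hCs : C * s = c0⁻¹ := by
    rw [hC, hs, ← Real.rpow_add hcos, show -(α+1)+α = -1 by ring, Real.rpow_neg_one]
  have hCval : C = c0⁻¹ / s := by rw [eq_div_iff hspos.ne']; exact hCs
  have hT2 : 1 + T^2 = (c0^2)⁻¹ := by
    rw [hT, hc0, ← Real.inv_one_add_tan_sq hcos.ne', inv_inv]
  have hvp : v p.2 = c0⁻¹ * b := by
    simp only [hv_def]
    rw [hb, ← mul_assoc, hCs]
  have hODE : b' = (1+b^2) ^ ((3-α)/2) := by rw [hb', hb]; exact hode _ hp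
  have hb'eq : b' = (1+b^2) * Real.sqrt (1+b^2) * (1+b^2) ^ (-(α/2)) := by
    rw [hODE, show (3-α)/2 = 1 + 1/2 + (-(α/2)) by ring, Real.rpow_add hg,
      Real.rpow_add hg, Real.rpow_one, ← Real.sqrt_eq_rpow]
  have hins : 1 + T^2 + (v p.2)^2 = (c0^2)⁻¹ * (1 + b^2) := by
    rw [hT2, hvp]; field_simp; try ring
  have hSval : Real.sqrt (1 + T^2 + (v p.2)^2) = c0⁻¹ * Real.sqrt (1+b^2) := by
    rw [hins, Real.sqrt_mul (by positivity) _, Real.sqrt_inv, Real.sqrt_sq hcos.le]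
  have hRHS : ((c0^2)⁻¹ * (1+b^2)) ^ (-(α/2)) = s * (1+b^2) ^ (-(α/2)) := by
    rw [Real.mul_rpow (by positivity) hg.le]
    congr 1
    rw [← Real.rpow_natCast c0 2, ← Real.rpow_neg hcos.le, ← Real.rpow_mul hcos.le, hs]
    norm_num
    ring_nf
  rw [zero_add, hSval, hins, hRHS, hvp, hb'eq, hCval]
  have hsq : Real.sqrt (1+b^2) ^ 2 = 1 + b^2 := Real.sq_sqrt hg.le
  have hRpos : 0 < Real.sqrt (1+b^2) := Real.sqrt_pos.2 hg
  set R := Real.sqrt (1+b^2) with hRdef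
  set X := (1+b^2) ^ (-(α/2)) with hXdef
  rw [← hsq]
  field_simp
  linear_combination (2 * s * R ^ 3 * X) * hsq
end

section
/- Let 0 < α < 1 and let ψ be the maximal solution of ψ'(s) = -(sin ψ(s))^α with initial value ψ(0) = ψ₀ ∈ (0, π/2). Then ψ reaches 0 in finite time: there exists s₀ > 0 with ψ(s) > 0 on [0, s₀) and ψ(s₀) = 0. -/
open Real Set

theorem angle_reaches_zero_in_finite_time
    (α : ℝ) (hα1 : 0 < α) (hα2 : α < 1)
    (ψ₀ : ℝ) (hψ₀ : ψ₀ ∈ Set.Ioo 0 (π/2))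
    (ψ : ℝ → ℝ) (h0 : ψ 0 = ψ₀)
    (hode : ∀ s ∈ Set.Ici (0:ℝ), HasDerivAt ψ (-(Real.sin (ψ s)) ^ α) s) :
    ∃ s₀ > (0:ℝ), (∀ s ∈ Set.Ico 0 s₀, 0 < ψ s) ∧ ψ s₀ = 0 := by
  obtain ⟨hψ₀0, hψ₀π⟩ := hψ₀
  have hπ : (0:ℝ) < π := Real.pi_pos
  have hcont : ∀ s : ℝ, 0 ≤ s → ContinuousAt ψ s := fun s hs => (hode s hs).continuousAt
  -- Lemma A : the solution never exceeds ψ₀ (barrier argument)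
  have hA : ∀ b : ℝ, 0 ≤ b → ∀ s ∈ Icc (0:ℝ) b, ψ s ≤ ψ₀ := by
    intro b hb
    set C : Set ℝ := {s | s ∈ Icc (0:ℝ) b ∧ ∀ t ∈ Icc (0:ℝ) s, ψ t ≤ ψ₀} with hCdef
    have h0C : (0:ℝ) ∈ C := by
      refine ⟨⟨le_refl 0, hb⟩, fun t ht => ?_⟩
      have : t = 0 := le_antisymm ht.2 ht.1
      rw [this, h0]
    have hCne : C.Nonempty := ⟨0, h0C⟩
    have hCb : BddAbove C := ⟨b, fun x hx => hx.1.2⟩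
    set c := sSup C with hc
    have hcC0 : 0 ≤ c := le_csSup hCb h0C
    have hcb : c ≤ b := csSup_le hCne (fun x hx => hx.1.2)
    have hlt : ∀ t, 0 ≤ t → t < c → ψ t ≤ ψ₀ := by
      intro t ht htc
      obtain ⟨x, hxC, hx⟩ := exists_lt_of_lt_csSup hCne htc
      exact hxC.2 t ⟨ht, hx.le⟩
    have hψc : ψ c ≤ ψ₀ := by
      rcases eq_or_lt_of_le hcC0 with h | h
      · rw [← h, h0]
      · have htd : Filter.Tendsto ψ (nhdsWithin c (Iio c)) (nhds (ψ c)) :=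
          ((hcont c hcC0).continuousWithinAt).tendsto
        refine le_of_tendsto htd ?_
        filter_upwards [Ioo_mem_nhdsLT_of_mem ⟨h, le_refl c⟩] with t ht
        exact hlt t ht.1.le ht.2
    rcases lt_or_eq_of_le hcb with hcb' | hcb'
    · exfalso
      have hev : ∀ᶠ s in nhdsWithin c (Ioi c), ψ s ≤ ψ₀ := by
        rcases lt_or_eq_of_le hψc with hlt' | heq
        · have htd : Filter.Tendsto ψ (nhdsWithin c (Ioi c)) (nhds (ψ c)) :=
            ((hcont c hcC0).continuousWithinAt).tendsto
          filter_upwards [htd.eventually_lt_const hlt'] with s hs using hs.le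
        · -- ψ c = ψ₀ : derivative is negative
          have hsin : 0 < Real.sin (ψ c) := by
            rw [heq]
            exact Real.sin_pos_of_pos_of_lt_pi hψ₀0 (by linarith)
          have hneg : -(Real.sin (ψ c)) ^ α < 0 := by
            have := Real.rpow_pos_of_pos hsin α
            linarith
          have hd := (hode c hcC0)
          rw [hasDerivAt_iff_tendsto_slope] at hd
          have hslope : ∀ᶠ s in nhdsWithin c {c}ᶜ, slope ψ c s < 0 :=
            hd.eventually_lt_const hneg
          have hslope' : ∀ᶠ s in nhdsWithin c (Ioi c), slope ψ c s < 0 :=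
            hslope.filter_mono (nhdsWithin_mono c (fun x hx => ne_of_gt hx))
          filter_upwards [hslope', self_mem_nhdsWithin] with s hs hs'
          have hsc : (0:ℝ) < s - c := by
            simp only [mem_Ioi] at hs'; linarith
          have : ψ s - ψ c < 0 := by
            have := mul_lt_mul_of_pos_left hs hsc
            rw [slope_def_field] at this
            field_simp at this
            linarith [this]
          linarith [heq ▸ this]
      obtain ⟨u, hu, huB⟩ := mem_nhdsGT_iff_exists_Ioc_subset.1 hev
      set s' := min u b with hs'
      have hcs' : c < s' := lt_min hu hcb'
      have hs'C : s' ∈ C := by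
        refine ⟨⟨le_trans hcC0 hcs'.le, min_le_right _ _⟩, fun t ht => ?_⟩
        rcases le_or_gt t c with h | h
        · rcases lt_or_eq_of_le h with h' | h'
          · exact hlt t ht.1 h'
          · rw [h']; exact hψc
        · exact huB ⟨h, le_trans ht.2 (min_le_left _ _)⟩
      exact absurd (le_csSup hCb hs'C) (not_le.2 hcs')
    · intro s hs
      rcases lt_or_eq_of_le hs.2 with h | h
      · exact hlt s hs.1 (hcb' ▸ h)
      · rw [h, ← hcb']; exact hψc
  -- Lemma B : Grönwall-type decay of ψ^(1-α)
  set k : ℝ := (1 - α) * (2 / π) ^ α with hkdef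
  have h2π : (0:ℝ) < 2 / π := by positivity
  have hk : 0 < k := mul_pos (by linarith) (Real.rpow_pos_of_pos h2π α)
  have hB : ∀ b : ℝ, 0 ≤ b → (∀ s ∈ Icc (0:ℝ) b, 0 < ψ s) →
      ψ b ^ (1 - α) + k * b ≤ ψ₀ ^ (1 - α) := by
    intro b hb hpos
    set h : ℝ → ℝ := fun s => ψ s ^ (1 - α) + k * s with hhdef
    have hderiv : ∀ s ∈ Icc (0:ℝ) b, HasDerivAt h
        ((-(Real.sin (ψ s)) ^ α) * (1 - α) * ψ s ^ (1 - α - 1) + k) s := by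
      intro s hs
      have h1 : HasDerivAt (fun s => ψ s ^ (1 - α))
          ((-(Real.sin (ψ s)) ^ α) * (1 - α) * ψ s ^ (1 - α - 1)) s :=
        (hode s hs.1).rpow_const (Or.inl (ne_of_gt (hpos s hs)))
      have h2 : HasDerivAt (fun s : ℝ => k * s) k s := by
        simpa using (hasDerivAt_id s).const_mul k
      exact h1.add h2
    have hanti : AntitoneOn h (Icc 0 b) := by
      refine antitoneOn_of_deriv_nonpos (convex_Icc 0 b)
        (fun s hs => (hderiv s hs).continuousAt.continuousWithinAt)
        (fun s hs => ?_) (fun s hs => ?_)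
      · rw [interior_Icc] at hs
        exact ((hderiv s (Ioo_subset_Icc_self hs)).differentiableAt).differentiableWithinAt
      · rw [interior_Icc] at hs
        have hs' := Ioo_subset_Icc_self hs
        rw [(hderiv s hs').deriv]
        set x := ψ s with hx
        have hx0 : 0 < x := hpos s hs'
        have hxψ₀ : x ≤ ψ₀ := hA b hb s hs'
        have hsin : 2 / π * x ≤ Real.sin x :=
          Real.mul_le_sin hx0.le (by linarith)
        have hsa : (2 / π) ^ α * x ^ α ≤ (Real.sin x) ^ α := by
          rw [← Real.mul_rpow h2π.le hx0.le]
          exact Real.rpow_le_rpow (by positivity) hsin hα1.le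
        have hexp : x ^ (1 - α - 1) = x ^ (-α) := by norm_num
        have hone : x ^ α * x ^ (-α) = 1 := by
          rw [← Real.rpow_add hx0]
          simp
        have hxneg : 0 < x ^ (-α) := Real.rpow_pos_of_pos hx0 _
        have hkey : (2 / π) ^ α ≤ (Real.sin x) ^ α * x ^ (-α) := by
          have := mul_le_mul_of_nonneg_right hsa hxneg.le
          rwa [mul_assoc, hone, mul_one] at this
        have hfin := mul_le_mul_of_nonneg_left hkey (by linarith : (0:ℝ) ≤ 1 - α)
        rw [hexp]
        nlinarith [hfin]
    have hmem0 : (0:ℝ) ∈ Icc (0:ℝ) b := ⟨le_refl 0, hb⟩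
    have hmemb : b ∈ Icc (0:ℝ) b := ⟨hb, le_refl b⟩
    have := hanti hmem0 hmemb hb
    simp only [hhdef, h0, mul_zero, add_zero] at this
    exact this
  -- choose the time horizon T
  have hψ₀pow : 0 < ψ₀ ^ (1 - α) := Real.rpow_pos_of_pos hψ₀0 _
  set T : ℝ := (ψ₀ ^ (1 - α) + 1) / k with hT
  have hT0 : 0 < T := div_pos (by linarith) hk
  -- the solution must touch 0 somewhere on [0, T]
  have hZne : ∃ s ∈ Icc (0:ℝ) T, ψ s ≤ 0 := by
    by_contra hcon
    push_neg at hcon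
    have hB' := hB T hT0.le (fun s hs => hcon s hs)
    have hkT : k * T = ψ₀ ^ (1 - α) + 1 := by
      rw [hT, mul_div_assoc']; exact mul_div_cancel_left₀ _ hk.ne'
    have : 0 < ψ T ^ (1 - α) :=
      Real.rpow_pos_of_pos (hcon T ⟨hT0.le, le_refl T⟩) _
    rw [hkT] at hB'
    linarith
  set Z : Set ℝ := Icc (0:ℝ) T ∩ ψ ⁻¹' (Iic 0) with hZ
  have hZne' : Z.Nonempty := by
    obtain ⟨s, hs1, hs2⟩ := hZne
    exact ⟨s, hs1, hs2⟩
  have hcontOn : ContinuousOn ψ (Icc 0 T) :=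
    fun s hs => (hcont s hs.1).continuousWithinAt
  have hZclosed : IsClosed Z :=
    hcontOn.preimage_isClosed_of_isClosed isClosed_Icc isClosed_Iic
  have hZbdd : BddBelow Z := ⟨0, fun x hx => hx.1.1⟩
  set s₀ := sInf Z with hs₀
  have hs₀Z : s₀ ∈ Z := hZclosed.csInf_mem hZne' hZbdd
  have hs₀0 : 0 ≤ s₀ := hs₀Z.1.1
  have hs₀T : s₀ ≤ T := hs₀Z.1.2
  have hs₀pos : 0 < s₀ := by
    rcases lt_or_eq_of_le hs₀0 with h | h
    · exact h
    · exfalso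
      have := hs₀Z.2
      rw [← h] at this
      simp only [mem_preimage, mem_Iic, h0] at this
      linarith
  have hIco : ∀ s ∈ Ico (0:ℝ) s₀, 0 < ψ s := by
    intro s hs
    by_contra hcon
    push_neg at hcon
    have : s ∈ Z := ⟨⟨hs.1, le_trans hs.2.le hs₀T⟩, hcon⟩
    exact absurd (csInf_le hZbdd this) (not_le.2 hs.2)
  refine ⟨s₀, hs₀pos, hIco, ?_⟩
  refine le_antisymm hs₀Z.2 ?_
  have htd : Filter.Tendsto ψ (nhdsWithin s₀ (Iio s₀)) (nhds (ψ s₀)) :=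
    ((hcont s₀ hs₀0).continuousWithinAt).tendsto
  refine ge_of_tendsto htd ?_
  filter_upwards [Ioo_mem_nhdsLT_of_mem ⟨hs₀pos, le_refl s₀⟩] with t ht
  exact (hIco t ⟨ht.1.le, ht.2⟩).le
end
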